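/- Let q be a power of an odd prime. For any multiplicative characters A, B₁, …, B_n, C of 𝔽_q^× and any λ₁, …, λ_n ∈ 𝔽_q^× (all nonzero), ℙ_D^{(n)}[A; B₁,…,B_n; C; λ₁,…,λ_n] = (AC)(−1) · ( ∏_{i=1}^n B̄_i(−λ_i) ) · ℙ_D^{(n)}[C̄·B₁B₂⋯B_n; B₁,…,B_n; Ā·B₁B₂⋯B_n; λ₁⁻¹, …, λ_n⁻¹]. -/

import Mathlib

open Finset

/-- Jacobi sum `J(A,B) = Σ_x A(x) B(1-x)`. -/
noncomputable def jacobiSum' {F : Type} [Field F] [Fintype F] (A B : MulChar F ℂ) : ℂ :=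
  ∑ x : F, A x * B (1 - x)

/-- One-variable finite-field period function `ℙ_D^{(1)}[A; B; C; λ]`. -/
noncomputable def P1 {F : Type} [Field F] [Fintype F] (A B C : MulChar F ℂ) (l : F) : ℂ :=
  ∑ y : F, A y * (C * A⁻¹) (1 - y) * B⁻¹ (1 - l * y)

/-- Two-variable finite-field Appell–Lauricella period function `ℙ_D^{(2)}`. -/
noncomputable def P2 {F : Type} [Field F] [Fintype F] (A B₁ B₂ C : MulChar F ℂ) (l₁ l₂ : F) : ℂ :=
  ∑ y : F, A y * (C * A⁻¹) (1 - y) * B₁⁻¹ (1 - l₁ * y) * B₂⁻¹ (1 - l₂ * y)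

/-- n-variable finite-field Appell–Lauricella period function `ℙ_D^{(n)}`. -/
noncomputable def PDn {F : Type} [Field F] [Fintype F] (n : ℕ) (A : MulChar F ℂ)
    (B : Fin n → MulChar F ℂ) (C : MulChar F ℂ) (l : Fin n → F) : ℂ :=
  ∑ y : F, A y * (C * A⁻¹) (1 - y) * ∏ i, (B i)⁻¹ (1 - l i * y)

/-- Normalized two-variable Appell–Lauricella function `𝔽_D^{(2)}`. -/
noncomputable def F2 {F : Type} [Field F] [Fintype F] (A B₁ B₂ C : MulChar F ℂ) (l₁ l₂ : F) : ℂ :=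
  P2 A B₁ B₂ C l₁ l₂ / jacobiSum' A (C * A⁻¹)

/-- Normalized n-variable Appell–Lauricella function `𝔽_D^{(n)}`. -/
noncomputable def FDn {F : Type} [Field F] [Fintype F] (n : ℕ) (A : MulChar F ℂ)
    (B : Fin n → MulChar F ℂ) (C : MulChar F ℂ) (l : Fin n → F) : ℂ :=
  PDn n A B C l / jacobiSum' A (C * A⁻¹)

/-- Finite-field Gauss hypergeometric function `₂𝔽₁[A,B;C;λ] = ℙ_D^{(1)}[B;A;C;λ]/J(B,C B̄)`. -/
noncomputable def twoF1 {F : Type} [Field F] [Fintype F] (A B C : MulChar F ℂ) (l : F) : ℂ :=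
  P1 B A C l / jacobiSum' B (C * B⁻¹)

open scoped Classical in
/-- `δ(x) = 1` if `x = 0`, else `0`. -/
noncomputable def deltaC {F : Type} [Field F] [Fintype F] (x : F) : ℂ :=
  if x = 0 then 1 else 0

noncomputable instance {F : Type} [Field F] [Fintype F] : Fintype (MulChar F ℂ) :=
  Fintype.ofFinite _

/-- Character binomial coefficient `(A choose χ) = -χ(-1) J(A, χ̄)`. -/
noncomputable def charBinom {F : Type} [Field F] [Fintype F] (A χ : MulChar F ℂ) : ℂ :=
  -χ (-1) * jacobiSum' A χ⁻¹

lemma prod_apply_ne {F : Type} [Field F] {ι : Type} (s : Finset ι)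
    (B : ι → MulChar F ℂ) {y : F} (hy : y ≠ 0) :
    (∏ i ∈ s, B i) y = ∏ i ∈ s, B i y := by
  induction s using Finset.cons_induction with
  | empty => simpa using MulChar.one_apply (isUnit_iff_ne_zero.mpr hy)
  | cons a s ha ih => rw [Finset.prod_cons, Finset.prod_cons, MulChar.mul_apply, ih]

/-- transformation `λᵢ ↦ λᵢ⁻¹` for `ℙ_D^{(n)}`. -/
theorem statement_9 (F : Type) [Field F] [Fintype F] (hq : Odd (Fintype.card F))
    (n : ℕ) (A C : MulChar F ℂ) (B : Fin n → MulChar F ℂ)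
    (l : Fin n → F) (hl : ∀ i, l i ≠ 0) :
    PDn n A B C l =
      (A * C) (-1) * (∏ i, (B i)⁻¹ (-(l i))) *
        PDn n (C⁻¹ * ∏ i, B i) B (A⁻¹ * ∏ i, B i) (fun i => (l i)⁻¹) := by
  unfold PDn
  have hD : (A⁻¹ * ∏ i, B i) * (C⁻¹ * ∏ i, B i)⁻¹ = C * A⁻¹ := by
    rw [mul_inv, inv_inv, mul_mul_mul_comm, mul_inv_cancel, mul_one, mul_comm]
  rw [hD]
  have hstep : (∑ y : F, A y * (C * A⁻¹) (1 - y) * ∏ i, (B i)⁻¹ (1 - l i * y))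
      = ∑ y : F, A y⁻¹ * (C * A⁻¹) (1 - y⁻¹) * ∏ i, (B i)⁻¹ (1 - l i * y⁻¹) :=
    Fintype.sum_bijective (·⁻¹) inv_involutive.bijective _ _ (fun x => by rw [inv_inv])
  rw [hstep, Finset.mul_sum]
  refine Finset.sum_congr rfl fun y _ => ?_
  rcases eq_or_ne y 0 with rfl | hy
  · simp [MulChar.map_nonunit A not_isUnit_zero,
      MulChar.map_nonunit (C⁻¹ * ∏ i, B i) not_isUnit_zero]
  have h1 : (1 : F) - y⁻¹ = ((-1) * (1 - y)) * y⁻¹ := by field_simp; ring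
  have h2 : ∀ i, (1 : F) - l i * y⁻¹ = ((-(l i)) * (1 - (l i)⁻¹ * y)) * y⁻¹ := by
    intro i
    field_simp
    rw [mul_sub, mul_one, mul_comm (l i), div_mul_cancel₀ y (hl i), neg_sub]
  rw [h1]
  simp only [h2, map_mul, Finset.prod_mul_distrib, MulChar.mul_apply,
    MulChar.inv_apply', inv_inv, inv_neg, inv_one, prod_apply_ne _ _ hy]
  have hA : A y⁻¹ * A y = 1 := by rw [← map_mul, inv_mul_cancel₀ hy, map_one]
  linear_combination (C (-1) * A (-1) * (C (1 - y) * A (1 - y)⁻¹) * C y⁻¹ *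
    ((∏ x : Fin n, (B x) (-(l x)⁻¹)) * (∏ x : Fin n, (B x) (1 - (l x)⁻¹ * y)⁻¹) *
      ∏ x : Fin n, (B x) y)) * hA
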